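/- arXiv:1609.00179 — 2 statements merged into one kernel-verified Lean document; each statement's English description precedes it below -/
import Mathlib

section
/- Define G : ℝ → ℝ by G(x) = log(1+x²) for x < 0 and G(x) = x² for x ≥ 0. Then its convex envelope satisfies G*(x) = 0 for x < 0 and G*(x) = x² for x ≥ 0; consequently Argmin(G*) = (−∞, 0], whereas co(Argmin(G)) = {0}. In particular the conclusion Argmin(G*) = co(Argmin(G)) fails for this coercive C² function G, for which liminf_{|x|→∞} G(x)/|x| = 0. -/
open Filter

/-- The convex envelope of `G`: the pointwise supremum of all convex functions lying below
`G`. -/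
noncomputable def convexEnvelope (G : ℝ → ℝ) : ℝ → ℝ :=
  fun x => sSup {v : ℝ | ∃ g : ℝ → ℝ,
    ConvexOn ℝ Set.univ g ∧ (∀ y, g y ≤ G y) ∧ g x = v}

/-- The function `G(x) = log(1+x²)` for `x < 0`, `G(x) = x²` for `x ≥ 0`. -/
noncomputable def Gex : ℝ → ℝ :=
  fun x => if x < 0 then Real.log (1 + x ^ 2) else x ^ 2

noncomputable def Eex : ℝ → ℝ := fun x => if x < 0 then 0 else x ^ 2

lemma Eex_nonneg (x : ℝ) : 0 ≤ Eex x := by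
  unfold Eex; split <;> positivity

lemma Eex_eq_sq_max (x : ℝ) : Eex x = (max x 0) ^ 2 := by
  unfold Eex
  rcases lt_or_ge x 0 with h | h
  · rw [if_pos h, max_eq_right h.le]; ring
  · rw [if_neg (not_lt.2 h), max_eq_left h]

lemma Eex_convex : ConvexOn ℝ Set.univ Eex := by
  constructor
  · exact convex_univ
  · intro x _ y _ a b ha hb hab
    simp only [smul_eq_mul, Eex_eq_sq_max]
    set u := max x 0 with hu
    set v := max y 0 with hv
    have hux : x ≤ u := le_max_left _ _
    have hvy : y ≤ v := le_max_left _ _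
    have hu0 : 0 ≤ u := le_max_right _ _
    have hv0 : 0 ≤ v := le_max_right _ _
    have h1 : max (a * x + b * y) 0 ≤ a * u + b * v := by
      apply max_le
      · nlinarith
      · positivity
    have h2 : 0 ≤ max (a * x + b * y) 0 := le_max_right _ _
    nlinarith [mul_self_le_mul_self h2 h1, mul_nonneg (mul_nonneg ha hb) (sq_nonneg (u - v))]

lemma Gex_nonneg (x : ℝ) : 0 ≤ Gex x := by
  unfold Gex; split
  · exact Real.log_nonneg (by nlinarith)
  · positivity

lemma Eex_le_Gex (x : ℝ) : Eex x ≤ Gex x := by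
  unfold Eex Gex; split
  · exact Real.log_nonneg (by nlinarith)
  · exact le_refl _

-- log(1+y^2)/|y| → 0 at atBot
lemma aux_tendsto : Tendsto (fun y : ℝ => Real.log (1 + y ^ 2) / y) atTop (nhds 0) := by
  have h0 : Tendsto (fun y : ℝ => Real.log 2 / y + 2 * (Real.log y / y)) atTop (nhds 0) := by
    have h1 : Tendsto (fun y : ℝ => Real.log 2 / y) atTop (nhds 0) :=
      tendsto_const_nhds.div_atTop tendsto_id
    have h2 : Tendsto (fun y : ℝ => Real.log y / y) atTop (nhds 0) :=
      Real.isLittleO_log_id_atTop.tendsto_div_nhds_zero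
    simpa using h1.add (h2.const_mul 2)
  have h3 : Tendsto (fun _ : ℝ => (0:ℝ)) atTop (nhds 0) := tendsto_const_nhds
  apply tendsto_of_tendsto_of_tendsto_of_le_of_le' h3 h0
  · filter_upwards [eventually_ge_atTop (1:ℝ)] with y hy
    have h5 : (0:ℝ) ≤ Real.log (1 + y ^ 2) := Real.log_nonneg (by nlinarith)
    positivity
  · filter_upwards [eventually_ge_atTop (1:ℝ)] with y hy
    have hy0 : 0 < y := by linarith
    have h4 : Real.log (1 + y ^ 2) ≤ Real.log 2 + 2 * Real.log y := by
      calc Real.log (1 + y ^ 2) ≤ Real.log (2 * y ^ 2) := by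
            apply Real.log_le_log (by positivity); nlinarith
        _ = Real.log 2 + 2 * Real.log y := by
            rw [Real.log_mul (by norm_num) (by positivity), Real.log_pow]; push_cast; ring
    calc Real.log (1 + y ^ 2) / y ≤ (Real.log 2 + 2 * Real.log y) / y := by gcongr
      _ = Real.log 2 / y + 2 * (Real.log y / y) := by ring

lemma aux_tendsto_bot : Tendsto (fun y : ℝ => Real.log (1 + y ^ 2) / y) atBot (nhds 0) := by
  have := (aux_tendsto.comp tendsto_neg_atBot_atTop)
  have h : Tendsto (fun y : ℝ => Real.log (1 + y ^ 2) / -y) atBot (nhds 0) := by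
    simpa [Function.comp_def] using this
  have h2 := h.neg
  simp only [div_neg, neg_neg, neg_zero] at h2
  exact h2

lemma env_eq (x : ℝ) : convexEnvelope Gex x = Eex x := by
  apply le_antisymm
  · refine csSup_le ⟨Eex x, Eex, Eex_convex, Eex_le_Gex, rfl⟩ ?_
    rintro v ⟨g, hg, hle, rfl⟩
    rcases lt_or_ge x 0 with hx | hx
    · -- g x ≤ 0 = Eex x
      have hEx : Eex x = 0 := if_pos hx
      rw [hEx]
      have hg0 : g 0 ≤ 0 := by
        have := hle 0; simpa [Gex] using this
      have key : ∀ᶠ y in atBot, g x ≤ x * (Real.log (1 + y ^ 2) / y) := by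
        filter_upwards [eventually_lt_atBot x] with y hy
        have hy0 : y < 0 := lt_trans hy hx
        set t : ℝ := x / y with ht
        have ht0 : 0 < t := div_pos_of_neg_of_neg hx hy0
        have hxe : x = t * y := by rw [ht, div_mul_cancel₀ _ hy0.ne]
        have ht1 : t < 1 := by nlinarith [hxe]
        have := hg.2 (Set.mem_univ y) (Set.mem_univ 0) ht0.le (by linarith : (0:ℝ) ≤ 1 - t)
          (by ring)
        simp only [smul_eq_mul, mul_zero, add_zero] at this
        rw [← hxe] at this
        have hgy : g y ≤ Real.log (1 + y ^ 2) := by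
          have := hle y; simpa [Gex, hy0] using this
        have h1 : t * g y ≤ t * Real.log (1 + y ^ 2) := by
          exact mul_le_mul_of_nonneg_left hgy ht0.le
        have h2 : (1 - t) * g 0 ≤ 0 := mul_nonpos_of_nonneg_of_nonpos (by linarith) hg0
        have : g x ≤ t * Real.log (1 + y ^ 2) := by linarith
        calc g x ≤ t * Real.log (1 + y ^ 2) := this
          _ = x * (Real.log (1 + y ^ 2) / y) := by rw [ht]; ring
      have hlim : Tendsto (fun y : ℝ => x * (Real.log (1 + y ^ 2) / y)) atBot (nhds 0) := by
        simpa using aux_tendsto_bot.const_mul x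
      exact ge_of_tendsto hlim key
    · have : g x ≤ Gex x := hle x
      have hGx : Gex x = x ^ 2 := if_neg (not_lt.2 hx)
      have hEx : Eex x = x ^ 2 := if_neg (not_lt.2 hx)
      rw [hEx]; rw [hGx] at this; exact this
  · apply le_csSup
    · refine ⟨Gex x, ?_⟩
      rintro v ⟨g, hg, hle, rfl⟩
      exact hle x
    · exact ⟨Eex, Eex_convex, Eex_le_Gex, rfl⟩

noncomputable def Dex : ℝ → ℝ := fun x => if x < 0 then 2 * x / (1 + x ^ 2) else 2 * x

noncomputable def D2ex : ℝ → ℝ :=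
  fun x => if x < 0 then (2 - 2 * x ^ 2) / (1 + x ^ 2) ^ 2 else 2

lemma one_add_sq_pos (x : ℝ) : (0:ℝ) < 1 + x ^ 2 := by positivity

lemma hasDeriv_log_branch (x : ℝ) :
    HasDerivAt (fun y : ℝ => Real.log (1 + y ^ 2)) (2 * x / (1 + x ^ 2)) x := by
  have h1 : HasDerivAt (fun y : ℝ => 1 + y ^ 2) (2 * x) x := by
    simpa using (hasDerivAt_pow 2 x).const_add 1
  exact h1.log (one_add_sq_pos x).ne'

lemma hasDeriv_sq (x : ℝ) : HasDerivAt (fun y : ℝ => y ^ 2) (2 * x) x := by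
  simpa using hasDerivAt_pow 2 x

lemma hasDeriv_Dleft (x : ℝ) :
    HasDerivAt (fun y : ℝ => 2 * y / (1 + y ^ 2)) ((2 - 2 * x ^ 2) / (1 + x ^ 2) ^ 2) x := by
  have h1 : HasDerivAt (fun y : ℝ => 2 * y) 2 x := by
    simpa using (hasDerivAt_id x).const_mul 2
  have h2 : HasDerivAt (fun y : ℝ => 1 + y ^ 2) (2 * x) x := by
    simpa using (hasDerivAt_pow 2 x).const_add 1
  have := h1.div h2 (one_add_sq_pos x).ne'
  exact this.congr_deriv (by ring)

lemma Gex_hasDerivAt (x : ℝ) : HasDerivAt Gex (Dex x) x := by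
  rcases lt_trichotomy x 0 with hx | hx | hx
  · have h := hasDeriv_log_branch x
    have he : Gex =ᶠ[nhds x] fun y => Real.log (1 + y ^ 2) := by
      filter_upwards [Iio_mem_nhds hx] with y hy
      simp [Gex, show y < 0 from hy]
    have := h.congr_of_eventuallyEq he
    simpa [Dex, hx] using this
  · subst hx
    have h1 : HasDerivWithinAt Gex 0 (Set.Iic 0) 0 := by
      have h := (hasDeriv_log_branch 0).hasDerivWithinAt (s := Set.Iic 0)
      simp only [mul_zero, zero_div] at h
      apply h.congr
      · intro y hy
        rcases lt_or_eq_of_le (Set.mem_Iic.1 hy) with h' | h'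
        · simp [Gex, h']
        · subst h'; simp [Gex]
      · simp [Gex]
    have h2 : HasDerivWithinAt Gex 0 (Set.Ici 0) 0 := by
      have h := (hasDeriv_sq 0).hasDerivWithinAt (s := Set.Ici 0)
      simp only [mul_zero] at h
      apply h.congr
      · intro y hy
        simp [Gex, not_lt.2 (Set.mem_Ici.1 hy : (0:ℝ) ≤ y)]
      · simp [Gex]
    have := h1.union h2
    rw [Set.Iic_union_Ici, hasDerivWithinAt_univ] at this
    simpa [Dex] using this
  · have h := hasDeriv_sq x
    have he : Gex =ᶠ[nhds x] fun y => y ^ 2 := by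
      filter_upwards [Ioi_mem_nhds hx] with y hy
      simp [Gex, not_lt.2 (le_of_lt (Set.mem_Ioi.1 hy : (0:ℝ) < y))]
    have := h.congr_of_eventuallyEq he
    simpa [Dex, not_lt.2 hx.le] using this

lemma Dex_hasDerivAt (x : ℝ) : HasDerivAt Dex (D2ex x) x := by
  rcases lt_trichotomy x 0 with hx | hx | hx
  · have h := hasDeriv_Dleft x
    have he : Dex =ᶠ[nhds x] fun y => 2 * y / (1 + y ^ 2) := by
      filter_upwards [Iio_mem_nhds hx] with y hy
      simp [Dex, show y < 0 from hy]
    have := h.congr_of_eventuallyEq he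
    simpa [D2ex, hx] using this
  · subst hx
    have h1 : HasDerivWithinAt Dex 2 (Set.Iic 0) 0 := by
      have h := (hasDeriv_Dleft 0).hasDerivWithinAt (s := Set.Iic 0)
      norm_num at h
      apply h.congr
      · intro y hy
        rcases lt_or_eq_of_le (Set.mem_Iic.1 hy) with h' | h'
        · simp [Dex, h']
        · subst h'; simp [Dex]
      · simp [Dex]
    have h2 : HasDerivWithinAt Dex 2 (Set.Ici 0) 0 := by
      have h : HasDerivAt (fun y : ℝ => 2 * y) 2 0 := by
        simpa using (hasDerivAt_id (0:ℝ)).const_mul 2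
      apply (h.hasDerivWithinAt (s := Set.Ici 0)).congr
      · intro y hy
        simp [Dex, not_lt.2 (Set.mem_Ici.1 hy : (0:ℝ) ≤ y)]
      · simp [Dex]
    have := h1.union h2
    rw [Set.Iic_union_Ici, hasDerivWithinAt_univ] at this
    simpa [D2ex] using this
  · have h : HasDerivAt (fun y : ℝ => 2 * y) 2 x := by
      simpa using (hasDerivAt_id x).const_mul 2
    have he : Dex =ᶠ[nhds x] fun y => 2 * y := by
      filter_upwards [Ioi_mem_nhds hx] with y hy
      simp [Dex, not_lt.2 (le_of_lt (Set.mem_Ioi.1 hy : (0:ℝ) < y))]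
    have := h.congr_of_eventuallyEq he
    simpa [D2ex, not_lt.2 hx.le] using this

lemma D2ex_continuous : Continuous D2ex := by
  unfold D2ex
  apply Continuous.if
  · intro a ha
    have h0 : a = 0 := by
      have : frontier {x : ℝ | x < 0} = {(0:ℝ)} := frontier_Iio
      rw [this] at ha
      simpa using ha
    subst h0
    norm_num
  · apply Continuous.div
    · continuity
    · continuity
    · intro x
      positivity
  · exact continuous_const

lemma Gex_contDiff : ContDiff ℝ 2 Gex := by
  have hG : deriv Gex = Dex := funext fun x => (Gex_hasDerivAt x).deriv
  have hD : deriv Dex = D2ex := funext fun x => (Dex_hasDerivAt x).deriv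
  rw [show (2 : WithTop ℕ∞) = 1 + 1 from rfl, contDiff_succ_iff_deriv]
  refine ⟨fun x => (Gex_hasDerivAt x).differentiableAt, by simp, ?_⟩
  rw [hG, contDiff_one_iff_deriv, hD]
  exact ⟨fun x => (Dex_hasDerivAt x).differentiableAt, D2ex_continuous⟩

lemma sq_tendsto_atBot : Tendsto (fun x : ℝ => x ^ 2) atBot atTop := by
  have h0 : Tendsto (fun x : ℝ => x ^ 2) atTop atTop := tendsto_pow_atTop (by norm_num)
  have h := h0.comp tendsto_neg_atBot_atTop
  simpa [Function.comp_def, neg_pow] using h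

lemma Gex_coercive : Tendsto Gex (Bornology.cobounded ℝ) atTop := by
  rw [Real.cobounded_eq, tendsto_sup]
  constructor
  · have h1 : Tendsto (fun x : ℝ => Real.log (1 + x ^ 2)) atBot atTop := by
      apply Real.tendsto_log_atTop.comp
      exact tendsto_atTop_add_const_left _ 1 sq_tendsto_atBot
    apply Tendsto.congr' _ h1
    filter_upwards [eventually_lt_atBot (0:ℝ)] with y hy
    simp [Gex, hy]
  · have h1 : Tendsto (fun x : ℝ => x ^ 2) atTop atTop := tendsto_pow_atTop (by norm_num)
    apply Tendsto.congr' _ h1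
    filter_upwards [eventually_ge_atTop (0:ℝ)] with y hy
    simp [Gex, not_lt.2 hy]

lemma ratio_tendsto_atBot : Tendsto (fun x : ℝ => Gex x / |x|) atBot (nhds 0) := by
  have h := aux_tendsto_bot.neg
  rw [neg_zero] at h
  apply Tendsto.congr' _ h
  filter_upwards [eventually_lt_atBot (0:ℝ)] with y hy
  simp [Gex, hy, abs_of_neg hy, div_neg]

lemma liminf_ratio :
    Filter.liminf (fun x : ℝ => Gex x / |x|) (Bornology.cobounded ℝ) = 0 := by
  rw [liminf_eq]
  have hset : {a : ℝ | ∀ᶠ x in Bornology.cobounded ℝ, a ≤ Gex x / |x|} = Set.Iic 0 := by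
    ext a
    simp only [Set.mem_setOf_eq, Set.mem_Iic]
    constructor
    · intro h
      by_contra hc
      push_neg at hc
      have hle : (atBot : Filter ℝ) ≤ Bornology.cobounded ℝ := by
        rw [Real.cobounded_eq]; exact le_sup_left
      have hb : ∀ᶠ x in atBot, a ≤ Gex x / |x| := hle h
      have := ge_of_tendsto ratio_tendsto_atBot hb
      linarith
    · intro ha
      exact Eventually.of_forall fun x => le_trans ha (div_nonneg (Gex_nonneg x) (abs_nonneg x))
  rw [hset, csSup_Iic]


/-- For `Gex` as above: `Gex*(x) = 0` for `x < 0`, `Gex*(x) = x²` for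
`x ≥ 0`; consequently `Argmin(Gex*) = (−∞,0]` while `co(Argmin(Gex)) = {0}`, so the
conclusion `Argmin(G*) = co(Argmin(G))` fails for this coercive `C²` function `Gex`, for
which `liminf_{|x|→∞} Gex(x)/|x| = 0`. -/
theorem stmt10 :
    (∀ x : ℝ, x < 0 → convexEnvelope Gex x = 0) ∧
    (∀ x : ℝ, 0 ≤ x → convexEnvelope Gex x = x ^ 2) ∧
    {x : ℝ | ∀ y, convexEnvelope Gex x ≤ convexEnvelope Gex y} = Set.Iic 0 ∧
    convexHull ℝ {x : ℝ | ∀ y, Gex x ≤ Gex y} = {0} ∧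
    {x : ℝ | ∀ y, convexEnvelope Gex x ≤ convexEnvelope Gex y}
      ≠ convexHull ℝ {x : ℝ | ∀ y, Gex x ≤ Gex y} ∧
    ContDiff ℝ 2 Gex ∧
    Filter.Tendsto Gex (Bornology.cobounded ℝ) Filter.atTop ∧
    Filter.liminf (fun x : ℝ => Gex x / |x|) (Bornology.cobounded ℝ) = 0 := by
  have hEzero : ∀ x : ℝ, x ≤ 0 → Eex x = 0 := by
    intro x hx
    rcases lt_or_eq_of_le hx with h | h
    · simp [Eex, h]
    · subst h; simp [Eex]
  have hargminE : {x : ℝ | ∀ y, convexEnvelope Gex x ≤ convexEnvelope Gex y} = Set.Iic 0 := by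
    ext x
    simp only [Set.mem_setOf_eq, Set.mem_Iic, env_eq]
    constructor
    · intro h
      by_contra hc
      push_neg at hc
      have h1 := h (-1)
      rw [hEzero (-1) (by norm_num)] at h1
      have h2 : Eex x = x ^ 2 := if_neg (not_lt.2 hc.le)
      nlinarith
    · intro hx y
      rw [hEzero x hx]
      exact Eex_nonneg y
  have hargminG : {x : ℝ | ∀ y, Gex x ≤ Gex y} = {(0:ℝ)} := by
    ext x
    simp only [Set.mem_setOf_eq, Set.mem_singleton_iff]
    constructor
    · intro h
      have h0 := h 0
      have hG0 : Gex 0 = 0 := by simp [Gex]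
      rw [hG0] at h0
      have hx0 : Gex x = 0 := le_antisymm h0 (Gex_nonneg x)
      by_contra hne
      rcases lt_trichotomy x 0 with hx | hx | hx
      · have : Gex x = Real.log (1 + x ^ 2) := if_pos hx
        rw [this] at hx0
        rcases Real.log_eq_zero.1 hx0 with h' | h' | h' <;> nlinarith
      · exact hne hx
      · have : Gex x = x ^ 2 := if_neg (not_lt.2 hx.le)
        rw [this] at hx0
        nlinarith
    · intro h y
      subst h
      simpa [Gex] using Gex_nonneg y
  refine ⟨?_, ?_, hargminE, ?_, ?_, Gex_contDiff, Gex_coercive, liminf_ratio⟩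
  · intro x hx
    rw [env_eq, hEzero x hx.le]
  · intro x hx
    rw [env_eq]
    exact if_neg (not_lt.2 hx)
  · rw [hargminG, convexHull_singleton]
  · rw [hargminE, hargminG, convexHull_singleton]
    intro h
    have : (-1:ℝ) ∈ ({(0:ℝ)} : Set ℝ) := h ▸ (by norm_num : (-1:ℝ) ∈ Set.Iic 0)
    simp at this
end

section
/- Let F : ℝ → ℝ be of class C² with F(t) > F(0) = 0 for all t ≠ 0 (i.e., Argmin(F) = {0}), liminf_{|t|→∞} F(t)/t² > 0, and F''(0) = 0. Define F̃(t) := min{F(t), F(−t)} and let H be the convex envelope of the function t ↦ F̃(√|t|). Then H is an even convex function, and the function φ : ℝ → ℝ given by φ(t) = H(t)/t for t ≠ 0 and φ(0) = 0 is continuous and strictly increasing on ℝ. -/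
open Filter Real

/-- `F̃(t) := min {F(t), F(−t)}`. -/
noncomputable def Ftilde (F : ℝ → ℝ) : ℝ → ℝ := fun t => min (F t) (F (-t))

/-- `H := (F̃(√|·|))*`, the convex envelope of `t ↦ F̃(√|t|)`. -/
noncomputable def Hfun (F : ℝ → ℝ) : ℝ → ℝ :=
  convexEnvelope (fun t => Ftilde F (Real.sqrt |t|))

/-- `φ(t) := H(t)/t` for `t ≠ 0` and `φ(0) := 0`. -/
noncomputable def phiFun (F : ℝ → ℝ) : ℝ → ℝ :=
  fun t => if t = 0 then 0 else Hfun F t / t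

/- ### Auxiliary lemmas -/

lemma env_mem_zero {G : ℝ → ℝ} (hG : ∀ y, 0 ≤ G y) (x : ℝ) :
    (0:ℝ) ∈ {v : ℝ | ∃ g : ℝ → ℝ, ConvexOn ℝ Set.univ g ∧ (∀ y, g y ≤ G y) ∧ g x = v} :=
  ⟨fun _ => 0, convexOn_const 0 convex_univ, hG, rfl⟩

lemma env_bddAbove (G : ℝ → ℝ) (x : ℝ) :
    BddAbove {v : ℝ | ∃ g : ℝ → ℝ, ConvexOn ℝ Set.univ g ∧ (∀ y, g y ≤ G y) ∧ g x = v} := by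
  refine ⟨G x, ?_⟩
  rintro v ⟨g, _, hle, rfl⟩
  exact hle x

lemma le_env {G g : ℝ → ℝ} (hg : ConvexOn ℝ Set.univ g) (hle : ∀ y, g y ≤ G y) (x : ℝ) :
    g x ≤ convexEnvelope G x :=
  le_csSup (env_bddAbove G x) ⟨g, hg, hle, rfl⟩

lemma env_le {G : ℝ → ℝ} (hG : ∀ y, 0 ≤ G y) (x : ℝ) : convexEnvelope G x ≤ G x := by
  refine csSup_le ⟨0, env_mem_zero hG x⟩ ?_
  rintro v ⟨g, _, hle, rfl⟩
  exact hle x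

lemma env_nonneg {G : ℝ → ℝ} (hG : ∀ y, 0 ≤ G y) (x : ℝ) : 0 ≤ convexEnvelope G x :=
  le_env (convexOn_const 0 convex_univ) hG x

lemma env_convex {G : ℝ → ℝ} (hG : ∀ y, 0 ≤ G y) :
    ConvexOn ℝ Set.univ (convexEnvelope G) := by
  refine ⟨convex_univ, fun x _ y _ a b ha hb hab => ?_⟩
  refine csSup_le ⟨0, env_mem_zero hG _⟩ ?_
  rintro v ⟨g, hg, hle, rfl⟩
  have h1 : g (a • x + b • y) ≤ a • g x + b • g y :=
    hg.2 (Set.mem_univ x) (Set.mem_univ y) ha hb hab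
  have h2 : g x ≤ convexEnvelope G x := le_env hg hle x
  have h3 : g y ≤ convexEnvelope G y := le_env hg hle y
  simp only [smul_eq_mul] at h1 ⊢
  nlinarith [mul_le_mul_of_nonneg_left h2 ha, mul_le_mul_of_nonneg_left h3 hb]

lemma env_even {G : ℝ → ℝ} (hG : ∀ y, 0 ≤ G y) (hGe : ∀ t, G (-t) = G t) (x : ℝ) :
    convexEnvelope G (-x) = convexEnvelope G x := by
  have key : ∀ z : ℝ,
      {v : ℝ | ∃ g : ℝ → ℝ, ConvexOn ℝ Set.univ g ∧ (∀ y, g y ≤ G y) ∧ g (-z) = v} ⊆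
      {v : ℝ | ∃ g : ℝ → ℝ, ConvexOn ℝ Set.univ g ∧ (∀ y, g y ≤ G y) ∧ g z = v} := by
    rintro z v ⟨g, hg, hle, rfl⟩
    refine ⟨fun y => g (-y), ?_, fun y => (hGe y) ▸ hle (-y), by simp⟩
    refine ⟨convex_univ, fun p _ q _ a b ha hb hab => ?_⟩
    have := hg.2 (Set.mem_univ (-p)) (Set.mem_univ (-q)) ha hb hab
    have hrw : a • -p + b • -q = -(a • p + b • q) := by simp [smul_eq_mul]; ring
    rw [hrw] at this
    simpa using this
  have h2 := key (-x)
  rw [neg_neg] at h2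
  exact le_antisymm
    (csSup_le_csSup (env_bddAbove G x) ⟨0, env_mem_zero hG (-x)⟩ (key x))
    (csSup_le_csSup (env_bddAbove G (-x)) ⟨0, env_mem_zero hG x⟩ h2)

lemma small_quadratic {F : ℝ → ℝ} (hF : ContDiff ℝ 2 F) (hF0 : F 0 = 0)
    (hF'0 : deriv F 0 = 0) (hF'' : iteratedDeriv 2 F 0 = 0) :
    ∀ c : ℝ, 0 < c → ∃ η > 0, ∀ s : ℝ, 0 < s → s < η → F s < c * s ^ 2 := by
  intro c hc
  have h21 : (2 : WithTop ℕ∞) = (1 : WithTop ℕ∞) + 1 := by norm_num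
  have hF1 : ContDiff ℝ 1 (deriv F) := by
    rw [h21, contDiff_succ_iff_deriv] at hF
    exact hF.2.2
  have hdF : Differentiable ℝ F := hF.differentiable (by norm_num)
  have hdF' : Differentiable ℝ (deriv F) := hF1.differentiable (by norm_num)
  have hF''c : Continuous (deriv (deriv F)) := hF1.continuous_deriv le_rfl
  have hiter : iteratedDeriv 2 F = deriv (deriv F) := by
    rw [show (2:ℕ) = 1+1 from rfl, iteratedDeriv_succ, iteratedDeriv_one]
  have hF''0 : deriv (deriv F) 0 = 0 := by rw [← hiter]; exact hF''
  obtain ⟨η, hη, hsmall⟩ := Metric.continuousAt_iff.mp hF''c.continuousAt c hc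
  refine ⟨η, hη, fun s hs hsη => ?_⟩
  obtain ⟨ξ₁, hξ₁, hsl₁⟩ := exists_hasDerivAt_eq_slope F (deriv F) hs
    hdF.continuous.continuousOn (fun x _ => (hdF x).hasDerivAt)
  obtain ⟨ξ₂, hξ₂, hsl₂⟩ := exists_hasDerivAt_eq_slope (deriv F) (deriv (deriv F)) hξ₁.1
    hdF'.continuous.continuousOn (fun x _ => (hdF' x).hasDerivAt)
  have hb : |deriv (deriv F) ξ₂| < c := by
    have : dist ξ₂ 0 < η := by
      simp only [Real.dist_eq, sub_zero]
      rw [abs_of_pos hξ₂.1]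
      linarith [hξ₂.2, hξ₁.2]
    have := hsmall this
    simpa [Real.dist_eq, hF''0] using this
  rw [hF0, sub_zero, sub_zero] at hsl₁
  rw [hF'0, sub_zero, sub_zero] at hsl₂
  have hFs : F s = deriv (deriv F) ξ₂ * ξ₁ * s := by
    have h1 : deriv F ξ₁ * s = F s := by
      rw [hsl₁]; field_simp
    have h2 : deriv (deriv F) ξ₂ * ξ₁ = deriv F ξ₁ := by
      rw [hsl₂, div_mul_cancel₀ _ (ne_of_gt hξ₁.1)]
    rw [h2, h1]
  have hlt : deriv (deriv F) ξ₂ < c := lt_of_le_of_lt (le_abs_self _) hb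
  have hξ₁s : ξ₁ < s := hξ₁.2
  have hξ₁0 : 0 < ξ₁ := hξ₁.1
  rw [hFs]
  nlinarith [mul_lt_mul_of_pos_right hlt (mul_pos hξ₁0 hs),
    mul_lt_mul_of_pos_left (mul_lt_mul_of_pos_right hξ₁s hs) hc]

set_option maxHeartbeats 2000000 in
/-- Let `F` be `C²` with `F(t) > F(0) = 0` for `t ≠ 0`,
`liminf_{|t|→∞} F(t)/t² > 0` and `F''(0) = 0`. Then `H` is an even convex function, and
`φ` is continuous and strictly increasing on `ℝ`. -/
theorem stmt15 (F : ℝ → ℝ) (hF : ContDiff ℝ 2 F) (hF0 : F 0 = 0)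
    (hargmin : ∀ t : ℝ, t ≠ 0 → F 0 < F t)
    (hliminf : 0 < Filter.liminf (fun t : ℝ => F t / t ^ 2) (Filter.atBot ⊔ Filter.atTop))
    (hF'' : iteratedDeriv 2 F 0 = 0) :
    (∀ t : ℝ, Hfun F (-t) = Hfun F t) ∧
    ConvexOn ℝ Set.univ (Hfun F) ∧
    Continuous (phiFun F) ∧
    StrictMono (phiFun F) := by
  -- Basic facts about `F` and `G := fun t => Ftilde F (√|t|)`.
  have hFpos : ∀ t : ℝ, 0 ≤ F t := by
    intro t
    rcases eq_or_ne t 0 with rfl | h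
    · exact le_of_eq hF0.symm
    · exact le_of_lt (hF0 ▸ hargmin t h)
  have hFpos' : ∀ t : ℝ, t ≠ 0 → 0 < F t := fun t ht => hF0 ▸ hargmin t ht
  have hGnn : ∀ y : ℝ, 0 ≤ (fun t => Ftilde F (Real.sqrt |t|)) y := by
    intro y; exact le_min (hFpos _) (hFpos _)
  have hGeven : ∀ t : ℝ, (fun t => Ftilde F (Real.sqrt |t|)) (-t)
      = (fun t => Ftilde F (Real.sqrt |t|)) t := by
    intro t; simp [abs_neg]
  have hGpos : ∀ t : ℝ, t ≠ 0 → 0 < Ftilde F (Real.sqrt |t|) := by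
    intro t ht
    have hs : Real.sqrt |t| ≠ 0 := by
      have : (0:ℝ) < |t| := abs_pos.mpr ht
      positivity
    exact lt_min (hFpos' _ hs) (hFpos' _ (neg_ne_zero.mpr hs))
  have hGcont : Continuous (fun t : ℝ => Ftilde F (Real.sqrt |t|)) := by
    have hFc : Continuous F := hF.continuous
    have hsq : Continuous (fun t : ℝ => Real.sqrt |t|) :=
      Real.continuous_sqrt.comp continuous_abs
    exact (hFc.comp hsq).min (hFc.comp hsq.neg)
  -- Basic facts about `H`.
  have hHeven : ∀ t : ℝ, Hfun F (-t) = Hfun F t := fun t => env_even hGnn hGeven t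
  have hHconv : ConvexOn ℝ Set.univ (Hfun F) := env_convex hGnn
  have hHle : ∀ x : ℝ, Hfun F x ≤ Ftilde F (Real.sqrt |x|) := fun x => env_le hGnn x
  have hHnn : ∀ x : ℝ, 0 ≤ Hfun F x := fun x => env_nonneg hGnn x
  have hH0 : Hfun F 0 = 0 := by
    refine le_antisymm ?_ (hHnn 0)
    have := hHle 0
    simpa [Ftilde, hF0] using this
  -- Extract a quadratic lower bound at infinity from the liminf hypothesis.
  obtain ⟨δ, hδmem, hδpos⟩ :
      ∃ δ ∈ {a : ℝ | ∀ᶠ t in (atBot ⊔ atTop), a ≤ F t / t ^ 2}, (0:ℝ) < δ := by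
    rw [Filter.liminf_eq] at hliminf
    have hne : {a : ℝ | ∀ᶠ t in (atBot ⊔ atTop), a ≤ F t / t ^ 2}.Nonempty := by
      by_contra h
      rw [Set.not_nonempty_iff_eq_empty] at h
      rw [h, Real.sSup_empty] at hliminf
      exact lt_irrefl 0 hliminf
    obtain ⟨a, ha, h0a⟩ := exists_lt_of_lt_csSup hne hliminf
    exact ⟨a, ha, h0a⟩
  rw [Set.mem_setOf_eq, Filter.eventually_sup] at hδmem
  obtain ⟨hbot, htop⟩ := hδmem
  obtain ⟨M₁, hM₁⟩ := Filter.eventually_atTop.mp htop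
  obtain ⟨M₂, hM₂⟩ := Filter.eventually_atBot.mp hbot
  set M : ℝ := max 1 (max M₁ (-M₂)) with hMdef
  have hM1 : (1:ℝ) ≤ M := le_max_left _ _
  have hM0 : (0:ℝ) ≤ M := by linarith
  have hFquad : ∀ s : ℝ, M ≤ |s| → δ * s ^ 2 ≤ F s := by
    intro s hs
    have hs2 : (0:ℝ) < s ^ 2 := by
      have : s ≠ 0 := by
        intro h; rw [h] at hs; simp at hs; linarith
      positivity
    rcases le_or_gt 0 s with h | h
    · have : M₁ ≤ s := by
        rw [abs_of_nonneg h] at hs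
        calc M₁ ≤ max M₁ (-M₂) := le_max_left _ _
          _ ≤ M := le_max_right _ _
          _ ≤ s := hs
      have := hM₁ s this
      exact (le_div_iff₀ hs2).mp this
    · have : s ≤ M₂ := by
        rw [abs_of_neg h] at hs
        have h1 : -M₂ ≤ max M₁ (-M₂) := le_max_right _ _
        have h2 : max M₁ (-M₂) ≤ M := le_max_right _ _
        linarith
      have := hM₂ s this
      exact (le_div_iff₀ hs2).mp this
  have hGlin : ∀ x : ℝ, M ^ 2 ≤ x → δ * x ≤ Ftilde F (Real.sqrt |x|) := by
    intro x hx
    have hx0 : (0:ℝ) ≤ x := le_trans (by positivity) hx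
    have hsx : M ≤ Real.sqrt x := (Real.le_sqrt hM0 hx0).mpr hx
    have habs : |x| = x := abs_of_nonneg hx0
    rw [habs]
    have hsq : Real.sqrt x ^ 2 = x := Real.sq_sqrt hx0
    have h1 : δ * x ≤ F (Real.sqrt x) := by
      have := hFquad (Real.sqrt x) (by rw [abs_of_nonneg (Real.sqrt_nonneg x)]; exact hsx)
      rw [hsq] at this; exact this
    have h2 : δ * x ≤ F (-Real.sqrt x) := by
      have := hFquad (-Real.sqrt x)
        (by rw [abs_neg, abs_of_nonneg (Real.sqrt_nonneg x)]; exact hsx)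
      rw [neg_pow, hsq] at this
      simpa using this
    exact le_min h1 h2
  -- Positivity of H away from 0.
  have hHpos : ∀ b : ℝ, 0 < b → 0 < Hfun F b := by
    intro b hb
    set T : ℝ := max (2 * M ^ 2) b with hTdef
    have hTb : b ≤ T := le_max_right _ _
    have hTM : 2 * M ^ 2 ≤ T := le_max_left _ _
    have hbm : b / 2 < b := by linarith
    have hb2 : (0:ℝ) < b / 2 := by linarith
    have hne : (Set.Icc (b/2) T).Nonempty := ⟨b, le_of_lt hbm, hTb⟩
    obtain ⟨z, hzmem, hzmin⟩ := isCompact_Icc.exists_isMinOn hne hGcont.continuousOn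
    have hmpos : 0 < Ftilde F (Real.sqrt |z|) :=
      hGpos z (by have := hzmem.1; intro h; rw [h] at this; linarith)
    set m : ℝ := Ftilde F (Real.sqrt |z|) with hmdef
    have hD : (0:ℝ) < T - b/2 + 1 := by linarith
    set α : ℝ := min (δ/2) (m / (T - b/2 + 1)) with hαdef
    have hαpos : 0 < α := lt_min (by linarith) (div_pos hmpos hD)
    have hα1 : α ≤ δ/2 := min_le_left _ _
    have hα2 : α ≤ m / (T - b/2 + 1) := min_le_right _ _
    set g : ℝ → ℝ := fun x => max 0 (α * (x - b/2)) with hgdef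
    have hgnn : ∀ x, 0 ≤ g x := fun x => le_max_left _ _
    have hgaff : ∀ x, α * (x - b/2) ≤ g x := fun x => le_max_right _ _
    have hgconv : ConvexOn ℝ Set.univ g := by
      refine ⟨convex_univ, fun x _ y _ a b' ha hb' hab => ?_⟩
      simp only [smul_eq_mul, hgdef]
      refine max_le ?_ ?_
      · exact add_nonneg (mul_nonneg ha (hgnn x)) (mul_nonneg hb' (hgnn y))
      · have hx := mul_le_mul_of_nonneg_left (hgaff x) ha
        have hy := mul_le_mul_of_nonneg_left (hgaff y) hb'
        have hexp : α * (a * x + b' * y - b/2)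
            = a * (α * (x - b/2)) + b' * (α * (y - b/2)) := by
          linear_combination (α * b / 2) * hab
        rw [hexp]
        exact add_le_add hx hy
    have hgle : ∀ x : ℝ, g x ≤ Ftilde F (Real.sqrt |x|) := by
      intro x
      rcases le_or_gt x (b/2) with hx | hx
      · refine max_le (hGnn x) ?_
        have : α * (x - b/2) ≤ 0 := mul_nonpos_of_nonneg_of_nonpos (le_of_lt hαpos)
          (by linarith)
        linarith [hGnn x]
      rcases le_or_gt x T with hxT | hxT
      · refine max_le (hGnn x) ?_
        have h1 : α * (x - b/2) ≤ α * (T - b/2) :=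
          mul_le_mul_of_nonneg_left (by linarith) (le_of_lt hαpos)
        have h2 : α * (T - b/2) ≤ m / (T - b/2 + 1) * (T - b/2) :=
          mul_le_mul_of_nonneg_right hα2 (by linarith)
        have h3 : m / (T - b/2 + 1) * (T - b/2) ≤ m := by
          rw [div_mul_eq_mul_div, div_le_iff₀ hD]
          nlinarith
        have h4 : m ≤ Ftilde F (Real.sqrt |x|) := hzmin ⟨le_of_lt hx, hxT⟩
        linarith
      · refine max_le (hGnn x) ?_
        have hxM : M ^ 2 ≤ x := by nlinarith [sq_nonneg M]
        have h5 : δ * x ≤ Ftilde F (Real.sqrt |x|) := hGlin x hxM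
        have hx0 : (0:ℝ) < x := by nlinarith [sq_nonneg M]
        have h6 : α * (x - b/2) ≤ (δ/2) * x := by
          have : α * (x - b/2) ≤ α * x :=
            mul_le_mul_of_nonneg_left (by linarith) (le_of_lt hαpos)
          have h7 : α * x ≤ (δ/2) * x := mul_le_mul_of_nonneg_right hα1 (le_of_lt hx0)
          linarith
        nlinarith
    have hgb : g b ≤ Hfun F b := le_env hgconv hgle b
    have : 0 < g b := by
      have : α * (b - b/2) = α * (b/2) := by ring
      calc (0:ℝ) < α * (b/2) := by positivity
        _ = α * (b - b/2) := by ring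
        _ ≤ g b := hgaff b
    linarith
  have hHpos' : ∀ t : ℝ, t ≠ 0 → 0 < Hfun F t := by
    intro t ht
    rcases lt_or_gt_of_ne ht with h | h
    · have : Hfun F t = Hfun F (-t) := by rw [← hHeven (-t), neg_neg]
      rw [this]
      exact hHpos (-t) (by linarith)
    · exact hHpos t h
  -- deriv F 0 = 0
  have hF'0 : deriv F 0 = 0 := by
    have hmin : IsLocalMin F 0 :=
      Filter.Eventually.of_forall (fun x => by rw [hF0]; exact hFpos x)
    exact hmin.deriv_eq_zero
  -- Secant monotonicity.
  have hsec : ∀ s t : ℝ, 0 < s → s ≤ t → Hfun F s / s ≤ Hfun F t / t := by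
    intro s t hs hst
    have := hHconv.secant_mono (a := 0) (x := s) (y := t) (Set.mem_univ 0)
      (Set.mem_univ s) (Set.mem_univ t) (ne_of_gt hs) (ne_of_gt (lt_of_lt_of_le hs hst)) hst
    simpa [hH0] using this
  -- Strict secant monotonicity.
  have hstrict : ∀ s t : ℝ, 0 < s → s < t → Hfun F s / s < Hfun F t / t := by
    intro s t hs hst
    rcases lt_or_ge (Hfun F s / s) (Hfun F t / t) with h | h
    · exact h
    exfalso
    have ht : (0:ℝ) < t := lt_trans hs hst
    have heq : Hfun F s / s = Hfun F t / t :=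
      le_antisymm (hsec s t hs (le_of_lt hst)) h
    set c : ℝ := Hfun F t / t with hcdef
    have hcpos : 0 < c := div_pos (hHpos t ht) ht
    have hHt : Hfun F t = c * t := by
      rw [hcdef, div_mul_cancel₀ _ (ne_of_gt ht)]
    have hHs : Hfun F s = c * s := by
      rw [← heq, div_mul_cancel₀ _ (ne_of_gt hs)]
    -- choose a small point u where G < c * u
    obtain ⟨η, hη, hsmall⟩ := small_quadratic hF hF0 hF'0 hF'' c hcpos
    have hss : (0:ℝ) < Real.sqrt s := Real.sqrt_pos.mpr hs
    set r : ℝ := min η (Real.sqrt s) / 2 with hrdef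
    have hr0 : 0 < r := by
      have : (0:ℝ) < min η (Real.sqrt s) := lt_min hη hss
      rw [hrdef]; linarith
    have hrη : r < η := by
      have h1 : min η (Real.sqrt s) ≤ η := min_le_left _ _
      rw [hrdef]; linarith [hη]
    have hrs : r < Real.sqrt s := by
      have h1 : min η (Real.sqrt s) ≤ Real.sqrt s := min_le_right _ _
      rw [hrdef]; linarith [hss]
    set u : ℝ := r ^ 2 with hudef
    have hu0 : 0 < u := by positivity
    have hus : u < s := by
      have := Real.sq_sqrt (le_of_lt hs)
      nlinarith [Real.sqrt_nonneg s]
    -- H u < c * u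
    have hHuG : Hfun F u ≤ F r := by
      have h1 := hHle u
      have h2 : Real.sqrt |u| = r := by
        rw [abs_of_pos hu0, hudef, Real.sqrt_sq (le_of_lt hr0)]
      rw [h2] at h1
      exact le_trans h1 (min_le_left _ _)
    have hFr : F r < c * u := by
      have := hsmall r hr0 hrη
      rw [hudef]; exact this
    have hHu : Hfun F u < c * u := lt_of_le_of_lt hHuG hFr
    -- convexity gives H u ≥ c * u
    set a : ℝ := (t - s) / (t - u) with hadef
    set b : ℝ := (s - u) / (t - u) with hbdef
    have htu : (0:ℝ) < t - u := by linarith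
    have hapos : 0 < a := div_pos (by linarith) htu
    have hbnn : 0 ≤ b := div_nonneg (by linarith) (le_of_lt htu)
    have htu' : t - u ≠ 0 := ne_of_gt htu
    have habsum : a + b = 1 := by
      rw [hadef, hbdef, ← add_div, div_eq_one_iff_eq htu']
      ring
    have hsum : a * u + b * t = s := by
      rw [hadef, hbdef, div_mul_eq_mul_div, div_mul_eq_mul_div, ← add_div,
        div_eq_iff htu']
      ring
    have hcomb : Hfun F (a * u + b * t) ≤ a * Hfun F u + b * Hfun F t := by
      have := hHconv.2 (Set.mem_univ u) (Set.mem_univ t) (le_of_lt hapos) hbnn habsum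
      simpa [smul_eq_mul] using this
    rw [hsum, hHs, hHt] at hcomb
    have haHu : a * Hfun F u < a * (c * u) := mul_lt_mul_of_pos_left hHu hapos
    have hcs : a * (c * u) + b * (c * t) = c * s := by
      rw [← hsum]; ring
    linarith
  -- φ is odd, positive on positives.
  have hφ0 : phiFun F 0 = 0 := by simp [phiFun]
  have hφodd : ∀ t : ℝ, phiFun F (-t) = - phiFun F t := by
    intro t
    rcases eq_or_ne t 0 with rfl | h
    · simp [phiFun]
    · have h' : -t ≠ 0 := neg_ne_zero.mpr h
      simp only [phiFun, if_neg h, if_neg h', hHeven t, div_neg]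
  have hφpos : ∀ t : ℝ, 0 < t → 0 < phiFun F t := by
    intro t ht
    simp only [phiFun, if_neg (ne_of_gt ht)]
    exact div_pos (hHpos t ht) ht
  have hφneg : ∀ t : ℝ, t < 0 → phiFun F t < 0 := by
    intro t ht
    have := hφpos (-t) (by linarith)
    have h2 := hφodd (-t)
    rw [neg_neg] at h2
    linarith
  have hφmono : ∀ s t : ℝ, 0 < s → s < t → phiFun F s < phiFun F t := by
    intro s t hs hst
    simp only [phiFun, if_neg (ne_of_gt hs), if_neg (ne_of_gt (lt_trans hs hst))]
    exact hstrict s t hs hst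
  -- Strict monotonicity of φ.
  have hmono : StrictMono (phiFun F) := by
    intro s t hst
    rcases lt_trichotomy s 0 with hs | rfl | hs
    · rcases lt_trichotomy t 0 with ht | rfl | ht
      · have h1 := hφmono (-t) (-s) (by linarith) (by linarith)
        rw [hφodd t, hφodd s] at h1
        linarith
      · rw [hφ0]; exact hφneg s hs
      · exact lt_trans (hφneg s hs) (hφpos t ht)
    · rw [hφ0]; exact hφpos t hst
    · exact hφmono s t hs hst
  -- Continuity of φ.
  have hHcont : Continuous (Hfun F) := by
    have h1 := hHconv.continuousOn_interior
    rw [interior_univ] at h1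
    exact continuousOn_univ.mp h1
  have hφcont : Continuous (phiFun F) := by
    rw [continuous_iff_continuousAt]
    intro x
    rcases eq_or_ne x 0 with rfl | hx
    · rw [Metric.continuousAt_iff]
      intro ε hε
      obtain ⟨η, hη, hsmall⟩ := small_quadratic hF hF0 hF'0 hF'' (ε/2) (by linarith)
      refine ⟨η ^ 2, by positivity, ?_⟩
      intro y hy
      rw [Real.dist_eq, sub_zero] at hy
      rw [Real.dist_eq, hφ0, sub_zero]
      rcases eq_or_ne y 0 with rfl | hy0
      · simpa [phiFun] using hε
      · have hay : (0:ℝ) < |y| := abs_pos.mpr hy0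
        have hsy : 0 < Real.sqrt |y| := Real.sqrt_pos.mpr hay
        have hsyη : Real.sqrt |y| < η := by
          rw [Real.sqrt_lt' hη]; exact hy
        have hkey : Hfun F |y| < (ε/2) * |y| := by
          have h1 := hHle |y|
          rw [abs_abs] at h1
          have h2 : Ftilde F (Real.sqrt |y|) ≤ F (Real.sqrt |y|) := min_le_left _ _
          have h3 := hsmall (Real.sqrt |y|) hsy hsyη
          rw [Real.sq_sqrt (le_of_lt hay)] at h3
          linarith
        have hHy : Hfun F y = Hfun F |y| := by
          rcases abs_choice y with h | h
          · rw [h]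
          · rw [h, hHeven]
        have hφy : phiFun F y = Hfun F y / y := if_neg hy0
        have hval : |phiFun F y| = Hfun F |y| / |y| := by
          rw [hφy, abs_div, abs_of_nonneg (hHnn y), hHy]
        rw [hval]
        rw [div_lt_iff₀ hay]
        nlinarith [hHnn |y|]
    · have h1 : ContinuousAt (fun t : ℝ => Hfun F t / t) x :=
        (hHcont.continuousAt).div continuousAt_id hx
      refine h1.congr ?_
      have hmem : {y : ℝ | y ≠ 0} ∈ nhds x := isOpen_ne.mem_nhds hx
      filter_upwards [hmem] with y hy
      simp [phiFun, hy]
  exact ⟨hHeven, hHconv, hφcont, hmono⟩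
end
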